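/- Under the stated assumptions, the analytically bias-corrected estimator β̃^A := (1 + 1/N + 1/T)·β̂_{N,T} satisfies E[β̃^A] = β·(1 − 1/T² − 1/N² − 1/(NT) + 1/(NT²) + 1/(N²T)); in particular its bias is of order max(N,T)^{-2} rather than max(N,T)^{-1}. -/

import Mathlib

open MeasureTheory

private lemma integrable_mul_L2 {Ω : Type*} [MeasurableSpace Ω] {P : Measure Ω}
    {f g : Ω → ℝ} (hf : MemLp f 2 P) (hg : MemLp g 2 P) :
    Integrable (fun ω => f ω * g ω) P := by
  have h := hg.smul (p := 2) (q := 2) (r := 1) hf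
  exact memLp_one_iff_integrable.mp h

private lemma master_second_moment {Ω : Type*} [MeasurableSpace Ω] {P : Measure Ω}
    {ι : Type*} [Fintype ι] [DecidableEq ι] (β : ℝ) (ε : ι → Ω → ℝ)
    (hL2 : ∀ p, MemLp (ε p) 2 P)
    (hvar : ∀ p, ∫ ω, (ε p ω) ^ 2 ∂P = β)
    (horth : ∀ p q, p ≠ q → ∫ ω, ε p ω * ε q ω ∂P = 0)
    (c : ι → ℝ) :
    ∫ ω, (∑ p, c p * ε p ω) ^ 2 ∂P = β * ∑ p, (c p) ^ 2 := by
  have hint : ∀ p q : ι, Integrable (fun ω => (c p * ε p ω) * (c q * ε q ω)) P := by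
    intro p q
    have h := (integrable_mul_L2 (hL2 p) (hL2 q)).const_mul (c p * c q)
    exact h.congr (Filter.Eventually.of_forall fun ω => by ring)
  calc ∫ ω, (∑ p, c p * ε p ω) ^ 2 ∂P
      = ∫ ω, ∑ p, ∑ q, (c p * ε p ω) * (c q * ε q ω) ∂P := by
        congr 1; funext ω; rw [sq, Finset.sum_mul_sum]
    _ = ∑ p, ∑ q, ∫ ω, (c p * ε p ω) * (c q * ε q ω) ∂P := by
        rw [integral_finset_sum _ (fun p _ => integrable_finset_sum _ (fun q _ => hint p q))]
        exact Finset.sum_congr rfl fun p _ => integral_finset_sum _ (fun q _ => hint p q)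
    _ = ∑ p, ∑ q, (if q = p then β * (c p) ^ 2 else 0) := by
        refine Finset.sum_congr rfl fun p _ => Finset.sum_congr rfl fun q _ => ?_
        by_cases h : q = p
        · subst h
          rw [if_pos rfl]
          have hq : ∫ ω, ε q ω * ε q ω ∂P = β := by
            rw [← hvar q]; congr 1; funext ω; ring
          calc ∫ ω, (c q * ε q ω) * (c q * ε q ω) ∂P
              = ∫ ω, (c q * c q) * (ε q ω * ε q ω) ∂P := by congr 1; funext ω; ring
            _ = (c q * c q) * ∫ ω, ε q ω * ε q ω ∂P := integral_const_mul _ _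
            _ = β * c q ^ 2 := by rw [hq]; ring
        · rw [if_neg h]
          calc ∫ ω, (c p * ε p ω) * (c q * ε q ω) ∂P
              = ∫ ω, (c p * c q) * (ε p ω * ε q ω) ∂P := by congr 1; funext ω; ring
            _ = (c p * c q) * ∫ ω, ε p ω * ε q ω ∂P := integral_const_mul _ _
            _ = 0 := by rw [horth p q (fun e => h e.symm), mul_zero]
    _ = ∑ p, β * (c p) ^ 2 := by simp
    _ = β * ∑ p, (c p) ^ 2 := by rw [Finset.mul_sum]

/-- Coefficients of the two-way within transformation as a linear map on the errors. -/
noncomputable def cc (N T : ℕ) (i : Fin N) (t : Fin T) (p : Fin N × Fin T) : ℝ :=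
  (if p.1 = i then if p.2 = t then 1 else 0 else 0) - (if p.1 = i then (T:ℝ)⁻¹ else 0)
  - (if p.2 = t then (N:ℝ)⁻¹ else 0) + ((N:ℝ)*(T:ℝ))⁻¹

private lemma cc_sq_sum {N T : ℕ} (hN0 : (N:ℝ) ≠ 0) (hT0 : (T:ℝ) ≠ 0)
    (i : Fin N) (t : Fin T) :
    ∑ p : Fin N × Fin T, (cc N T i t p) ^ 2
      = 1 - (N:ℝ)⁻¹ - (T:ℝ)⁻¹ + ((N:ℝ)*(T:ℝ))⁻¹ := by
  rw [Fintype.sum_prod_type]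
  have hc2 : ∀ (j : Fin N) (s : Fin T), (cc N T i t (j,s)) ^ 2 =
      (if j = i then (if s = t then 1 - 2*(T:ℝ)⁻¹ - 2*(N:ℝ)⁻¹ + 4*((N:ℝ)*(T:ℝ))⁻¹ else 0)
        + ((T:ℝ)⁻¹^2 - 2*(N:ℝ)⁻¹*(T:ℝ)⁻¹^2) else 0)
      + (if s = t then ((N:ℝ)⁻¹^2 - 2*(N:ℝ)⁻¹^2*(T:ℝ)⁻¹) else 0)
      + (N:ℝ)⁻¹^2*(T:ℝ)⁻¹^2 := by
    intro j s; simp only [cc]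
    split_ifs <;> field_simp <;> ring
  have h1 : ∀ j : Fin N, ∑ s : Fin T, (cc N T i t (j,s)) ^ 2 =
      (if j = i then (1 - 2*(T:ℝ)⁻¹ - 2*(N:ℝ)⁻¹ + 4*((N:ℝ)*(T:ℝ))⁻¹)
        + (T:ℝ)*((T:ℝ)⁻¹^2 - 2*(N:ℝ)⁻¹*(T:ℝ)⁻¹^2) else 0)
      + (((N:ℝ)⁻¹^2 - 2*(N:ℝ)⁻¹^2*(T:ℝ)⁻¹) + (T:ℝ)*((N:ℝ)⁻¹^2*(T:ℝ)⁻¹^2)) := by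
    intro j
    by_cases h : j = i <;>
      simp [hc2, h, Finset.sum_add_distrib, Finset.sum_ite_eq', Finset.sum_const,
        Finset.card_univ, Fintype.card_fin, nsmul_eq_mul] <;> ring
  simp_rw [h1]
  rw [Finset.sum_add_distrib, Finset.sum_ite_eq', Finset.sum_const, Finset.card_univ,
    Fintype.card_fin, nsmul_eq_mul]
  simp only [Finset.mem_univ, if_true]
  field_simp
  ring

private lemma within_eq {Ω : Type*} {N T : ℕ}
    (hN0 : (N:ℝ) ≠ 0) (hT0 : (T:ℝ) ≠ 0)
    (α : Fin N → ℝ) (γ : Fin T → ℝ) (Y : Fin N → Fin T → Ω → ℝ)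
    (i : Fin N) (t : Fin T) (ω : Ω) :
    Y i t ω - (T : ℝ)⁻¹ * ∑ s, Y i s ω - (N : ℝ)⁻¹ * ∑ j, Y j t ω
      + ((N : ℝ) * T)⁻¹ * ∑ j, ∑ s, Y j s ω
    = ∑ p : Fin N × Fin T, cc N T i t p * (Y p.1 p.2 ω - α p.1 - γ p.2) := by
  rw [Fintype.sum_prod_type]
  have expand : ∀ (j : Fin N) (s : Fin T), cc N T i t (j,s) * (Y j s ω - α j - γ s) =
      (if j = i then (if s = t then (Y j s ω - α j - γ s) else 0)
          - (T:ℝ)⁻¹ * (Y j s ω - α j - γ s) else 0)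
      - (if s = t then (N:ℝ)⁻¹ * (Y j s ω - α j - γ s) else 0)
      + ((N:ℝ)*(T:ℝ))⁻¹ * (Y j s ω - α j - γ s) := by
    intro j s; simp only [cc]; split_ifs <;> ring
  simp_rw [expand]
  have h1 : ∀ j : Fin N, ∑ s, ((if j = i then (if s = t then (Y j s ω - α j - γ s) else 0)
          - (T:ℝ)⁻¹ * (Y j s ω - α j - γ s) else 0)
      - (if s = t then (N:ℝ)⁻¹ * (Y j s ω - α j - γ s) else 0)
      + ((N:ℝ)*(T:ℝ))⁻¹ * (Y j s ω - α j - γ s))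
      = (if j = i then (Y j t ω - α j - γ t)
          - (T:ℝ)⁻¹ * (∑ s, Y j s ω - (T:ℝ) * α j - ∑ s, γ s) else 0)
      - (N:ℝ)⁻¹ * (Y j t ω - α j - γ t)
      + ((N:ℝ)*(T:ℝ))⁻¹ * (∑ s, Y j s ω - (T:ℝ) * α j - ∑ s, γ s) := by
    intro j
    rw [Finset.sum_add_distrib, Finset.sum_sub_distrib]
    congr 1
    · congr 1
      · split_ifs with h
        · rw [Finset.sum_sub_distrib, ← Finset.mul_sum, Finset.sum_ite_eq', Finset.sum_sub_distrib,
            Finset.sum_sub_distrib, Finset.sum_const, Finset.card_univ, Fintype.card_fin]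
          simp [mul_comm]
        · simp
      · rw [Finset.sum_ite_eq']; simp
    · rw [← Finset.mul_sum, Finset.sum_sub_distrib, Finset.sum_sub_distrib, Finset.sum_const,
        Finset.card_univ, Fintype.card_fin]
      simp [mul_comm]
  simp_rw [h1]
  rw [Finset.sum_add_distrib, Finset.sum_sub_distrib, Finset.sum_ite_eq', ← Finset.mul_sum,
    ← Finset.mul_sum]
  simp only [Finset.mem_univ, if_true]
  field_simp
  simp only [Finset.sum_sub_distrib, ← Finset.mul_sum, Finset.sum_const, Finset.card_univ,
    Fintype.card_fin, nsmul_eq_mul]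
  ring

/-- The analytically bias-corrected estimator `β̃^A = (1 + 1/N + 1/T)·β̂_{N,T}` satisfies
`E[β̃^A] = β·(1 − 1/T² − 1/N² − 1/(NT) + 1/(NT²) + 1/(N²T))`, so its bias is of
order `max(N,T)^{-2}`. -/
theorem analytical_bias_correction
    {Ω : Type*} [MeasurableSpace Ω] {P : Measure Ω} [IsProbabilityMeasure P]
    {N T : ℕ} (hN : 1 ≤ N) (hT : 1 ≤ T)
    (β : ℝ) (α : Fin N → ℝ) (γ : Fin T → ℝ)
    (Y : Fin N → Fin T → Ω → ℝ)
    (hL2 : ∀ (i : Fin N) (t : Fin T), MemLp (fun ω => Y i t ω - α i - γ t) 2 P)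
    (hmean : ∀ (i : Fin N) (t : Fin T), ∫ ω, (Y i t ω - α i - γ t) ∂P = 0)
    (hvar : ∀ (i : Fin N) (t : Fin T), ∫ ω, (Y i t ω - α i - γ t) ^ 2 ∂P = β)
    (horth : ∀ (i j : Fin N) (t s : Fin T), (i, t) ≠ (j, s) →
      ∫ ω, (Y i t ω - α i - γ t) * (Y j s ω - α j - γ s) ∂P = 0) :
    ∫ ω, (1 + 1 / (N : ℝ) + 1 / (T : ℝ)) *
        (((N : ℝ) * T)⁻¹ * ∑ i, ∑ t,
          (Y i t ω - (T : ℝ)⁻¹ * ∑ s, Y i s ω - (N : ℝ)⁻¹ * ∑ j, Y j t ω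
            + ((N : ℝ) * T)⁻¹ * ∑ j, ∑ s, Y j s ω) ^ 2) ∂P
      = β * (1 - 1 / (T : ℝ) ^ 2 - 1 / (N : ℝ) ^ 2 - 1 / ((N : ℝ) * T)
          + 1 / ((N : ℝ) * (T : ℝ) ^ 2) + 1 / ((N : ℝ) ^ 2 * T)) := by
  have hN0 : (N:ℝ) ≠ 0 := Nat.cast_ne_zero.mpr (by omega)
  have hT0 : (T:ℝ) ≠ 0 := Nat.cast_ne_zero.mpr (by omega)
  set ε : Fin N × Fin T → Ω → ℝ := fun p ω => Y p.1 p.2 ω - α p.1 - γ p.2 with hεdef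
  have hL2' : ∀ p : Fin N × Fin T, MemLp (ε p) 2 P := fun p => hL2 p.1 p.2
  have hvar' : ∀ p : Fin N × Fin T, ∫ ω, (ε p ω) ^ 2 ∂P = β := fun p => hvar p.1 p.2
  have horth' : ∀ p q : Fin N × Fin T, p ≠ q → ∫ ω, ε p ω * ε q ω ∂P = 0 := by
    intro p q h
    exact horth p.1 q.1 p.2 q.2 (by simpa using h)
  have hint2 : ∀ (i : Fin N) (t : Fin T),
      Integrable (fun ω => (∑ p : Fin N × Fin T, cc N T i t p * ε p ω) ^ 2) P := by
    intro i t
    have hm : MemLp (fun ω => ∑ p : Fin N × Fin T, cc N T i t p * ε p ω) 2 P := by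
      have h := memLp_finset_sum' (μ := P) Finset.univ
        (f := fun p : Fin N × Fin T => fun ω => cc N T i t p * ε p ω)
        (fun p _ => (hL2' p).const_mul _)
      have he : (fun ω => ∑ p : Fin N × Fin T, cc N T i t p * ε p ω)
          = ∑ p : Fin N × Fin T, fun ω => cc N T i t p * ε p ω := by
        funext ω; simp
      rw [he]; exact h
    exact hm.integrable_sq
  have hK : ((N:ℝ)*(T:ℝ)) ≠ 0 := mul_ne_zero hN0 hT0
  calc ∫ ω, (1 + 1 / (N : ℝ) + 1 / (T : ℝ)) *
        (((N : ℝ) * T)⁻¹ * ∑ i, ∑ t,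
          (Y i t ω - (T : ℝ)⁻¹ * ∑ s, Y i s ω - (N : ℝ)⁻¹ * ∑ j, Y j t ω
            + ((N : ℝ) * T)⁻¹ * ∑ j, ∑ s, Y j s ω) ^ 2) ∂P
      = ∫ ω, ((1 + 1 / (N : ℝ) + 1 / (T : ℝ)) * ((N : ℝ) * T)⁻¹) *
          (∑ i, ∑ t, (∑ p : Fin N × Fin T, cc N T i t p * ε p ω) ^ 2) ∂P := by
        congr 1; funext ω
        rw [mul_assoc]
        congr 2
        refine Finset.sum_congr rfl fun i _ => Finset.sum_congr rfl fun t _ => ?_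
        rw [within_eq hN0 hT0 α γ Y i t ω]
    _ = ((1 + 1 / (N : ℝ) + 1 / (T : ℝ)) * ((N : ℝ) * T)⁻¹) *
          ∫ ω, (∑ i, ∑ t, (∑ p : Fin N × Fin T, cc N T i t p * ε p ω) ^ 2) ∂P :=
        integral_const_mul _ _
    _ = ((1 + 1 / (N : ℝ) + 1 / (T : ℝ)) * ((N : ℝ) * T)⁻¹) *
          ∑ i, ∑ t, ∫ ω, (∑ p : Fin N × Fin T, cc N T i t p * ε p ω) ^ 2 ∂P := by
        congr 1
        rw [integral_finset_sum _ (fun i _ => integrable_finset_sum _ (fun t _ => hint2 i t))]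
        exact Finset.sum_congr rfl fun i _ => integral_finset_sum _ (fun t _ => hint2 i t)
    _ = ((1 + 1 / (N : ℝ) + 1 / (T : ℝ)) * ((N : ℝ) * T)⁻¹) *
          ∑ i : Fin N, ∑ t : Fin T, (β * (1 - (N:ℝ)⁻¹ - (T:ℝ)⁻¹ + ((N:ℝ)*(T:ℝ))⁻¹)) := by
        congr 1
        refine Finset.sum_congr rfl fun i _ => Finset.sum_congr rfl fun t _ => ?_
        rw [master_second_moment β ε hL2' hvar' horth' (cc N T i t), cc_sq_sum hN0 hT0 i t]
    _ = β * (1 - 1 / (T : ℝ) ^ 2 - 1 / (N : ℝ) ^ 2 - 1 / ((N : ℝ) * T)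
          + 1 / ((N : ℝ) * (T : ℝ) ^ 2) + 1 / ((N : ℝ) ^ 2 * T)) := by
        rw [Finset.sum_const, Finset.sum_const, Finset.card_univ, Fintype.card_fin,
          Finset.card_univ, Fintype.card_fin, nsmul_eq_mul, nsmul_eq_mul]
        field_simp
        ring
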